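/- Let A = (a_{ij}) be a doubly stochastic N×N real matrix (a_{ij} ≥ 0, each row and each column sums to 1), and let q = (q_1,...,q_N) be a probability vector. Define p_i = ∑_j a_{ij} q_j. Then the Shannon entropy satisfies H(p) ≥ H(q), i.e., -∑_i p_i log p_i ≥ -∑_j q_j log q_j. -/
import Mathlib

/-- Applying a doubly stochastic matrix to a probability vector does not
decrease the Shannon entropy. -/
theorem shannon_entropy_le_of_doublyStochastic (N : ℕ)
    (a : Fin N → Fin N → ℝ) (q : Fin N → ℝ)
    (ha : ∀ i j, 0 ≤ a i j)
    (hrow : ∀ i, ∑ j, a i j = 1) (hcol : ∀ j, ∑ i, a i j = 1)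
    (hq0 : ∀ j, 0 ≤ q j) (hq1 : ∑ j, q j = 1)
    (p : Fin N → ℝ) (hp : ∀ i, p i = ∑ j, a i j * q j) :
    ∑ j, Real.negMulLog (q j) ≤ ∑ i, Real.negMulLog (p i) := by
  have key : ∀ i, ∑ j, a i j * Real.negMulLog (q j) ≤ Real.negMulLog (p i) := by
    intro i
    have := Real.concaveOn_negMulLog.le_map_sum (t := Finset.univ) (w := a i) (p := q)
      (fun j _ => ha i j) (hrow i) (fun j _ => hq0 j)
    simpa [hp i, smul_eq_mul] using this
  calc ∑ j, Real.negMulLog (q j)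
      = ∑ i, ∑ j, a i j * Real.negMulLog (q j) := by
        rw [Finset.sum_comm]
        congr 1; ext j
        rw [← Finset.sum_mul, hcol j, one_mul]
    _ ≤ ∑ i, Real.negMulLog (p i) := Finset.sum_le_sum (fun i _ => key i)
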